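/- arXiv:math-ph/0403027 — 3 statements merged into one kernel-verified Lean document; each statement's English description precedes it below -/
import Mathlib

section
/- Let G : ℝ^m → ℝ^m be continuously differentiable and monotone, i.e. ⟨G(p) − G(q), p − q⟩ ≥ 0 for all p, q ∈ ℝ^m. Let φ₁, φ₂ : ℝ^m × ℝ → ℝ be twice continuously differentiable solutions of the nonlinear diffusion equation ∂φ/∂t(x,t) = div_x ( G(∇φ(x,t)) ) such that φ₁(·,t) − φ₂(·,t) is supported in a fixed compact set K ⊆ ℝ^m for every t. Then t ↦ ∫_{ℝ^m} (φ₁(x,t) − φ₂(x,t))² dx is differentiable with derivative d/dt ∫_{ℝ^m} (φ₁ − φ₂)² dx = −2 ∫_{ℝ^m} ⟨ G(∇φ₁) − G(∇φ₂), ∇φ₁ − ∇φ₂ ⟩ dx ≤ 0; in particular the squared L² distance between the two solutions is nonincreasing (semi-contraction). -/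
open MeasureTheory RealInnerProductSpace

open Set in
theorem pi_div_zero {n : ℕ} (f : (Fin (n+1) → ℝ) → (Fin (n+1) → ℝ))
    (hf : ContDiff ℝ 1 f) (hcs : HasCompactSupport f) :
    ∫ x, ∑ i, fderiv ℝ (fun y => f y i) x (Pi.single i 1) = 0 := by
  obtain ⟨R', hR'⟩ := hcs.isCompact.isBounded.subset_closedBall 0
  set R : ℝ := max R' 0 with hRdef
  have hR0 : 0 ≤ R := le_max_right _ _
  have hR : tsupport f ⊆ Metric.closedBall 0 R :=
    hR'.trans (Metric.closedBall_subset_closedBall (le_max_left _ _))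
  have hout : ∀ x : Fin (n+1) → ℝ, R < ‖x‖ → f x = 0 := by
    intro x hx
    by_contra h
    have : x ∈ tsupport f := subset_tsupport f h
    have := hR this
    simp only [Metric.mem_closedBall, dist_zero_right] at this
    linarith
  set a : Fin (n+1) → ℝ := fun _ => -(R+1) with ha
  set b : Fin (n+1) → ℝ := fun _ => (R+1) with hb
  have hle : a ≤ b := fun i => by simp only [ha, hb]; linarith
  have hfc : ∀ i : Fin (n+1), ContDiff ℝ 1 (fun y => f y i) := by
    intro i
    exact (ContDiff.comp (contDiff_apply ℝ ℝ i) hf)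
  have hdiff : ∀ i, Differentiable ℝ (fun y => f y i) := fun i => (hfc i).differentiable one_ne_zero
  have hcont : Continuous fun x => ∑ i, fderiv ℝ (fun y => f y i) x (Pi.single i 1) := by
    refine continuous_finset_sum _ (fun i _ => ?_)
    exact (((hfc i).fderiv_right (m := 0) le_rfl).continuous).clm_apply continuous_const
  have hdivout : ∀ x : Fin (n+1) → ℝ, x ∉ Metric.closedBall (0 : Fin (n+1) → ℝ) R →
      ∑ i, fderiv ℝ (fun y => f y i) x (Pi.single i 1) = 0 := by
    intro x hx
    have hop : IsOpen (tsupport f)ᶜ := hcs.isCompact.isClosed.isOpen_compl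
    have hxmem : x ∈ (tsupport f)ᶜ := fun hmem => hx (hR hmem)
    have hz : ∀ i, fderiv ℝ (fun y => f y i) x = 0 := by
      intro i
      have hev : (fun y => f y i) =ᶠ[nhds x] (fun _ => 0) := by
        filter_upwards [hop.mem_nhds hxmem] with y hy
        simp [image_eq_zero_of_notMem_tsupport hy]
      rw [hev.fderiv_eq, fderiv_fun_const]
      rfl
    simp [hz]
  have key := integral_divergence_of_hasFDerivAt_off_countable' a b hle
    (fun i x => f x i) (fun i x => fderiv ℝ (fun y => f y i) x) ∅ countable_empty
    (fun i => (hfc i).continuous.continuousOn)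
    (fun x _ i => ((hdiff i) x).hasFDerivAt)
    (hcont.continuousOn.integrableOn_compact isCompact_Icc)
  have hface : ∀ (i : Fin (n+1)) (c : ℝ), |c| = R + 1 →
      ∀ x : Fin n → ℝ, f (i.insertNth c x : Fin (n+1) → ℝ) i = 0 := by
    intro i c hc x
    have h2 : R < ‖(i.insertNth c x : Fin (n+1) → ℝ)‖ := by
      have h1 : |c| ≤ ‖(i.insertNth c x : Fin (n+1) → ℝ)‖ := by
        have := norm_le_pi_norm (i.insertNth c x : Fin (n+1) → ℝ) i
        simpa using this
      rw [hc] at h1; linarith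
    simp [hout _ h2]
  rw [Finset.sum_eq_zero, setIntegral_eq_integral_of_forall_compl_eq_zero] at key
  · exact key
  · intro x hx
    refine hdivout x (fun hmem => hx ?_)
    simp only [Metric.mem_closedBall, dist_zero_right] at hmem
    refine Set.mem_Icc.2 ⟨fun i => ?_, fun i => ?_⟩ <;>
    · have h3 : |x i| ≤ R := by
        have := (norm_le_pi_norm x i).trans hmem
        simpa using this
      have := abs_le.1 h3
      simp only [ha, hb]
      linarith [this.1, this.2]
  · intro i _
    have hb' : |b i| = R + 1 := by
      rw [show b i = R + 1 from rfl, abs_of_nonneg (by linarith)]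
    have ha' : |a i| = R + 1 := by
      rw [show a i = -(R + 1) from rfl, abs_neg, abs_of_nonneg (by linarith)]
    have e1 : (fun x : Fin n → ℝ => f (i.insertNth (b i) x : Fin (n+1) → ℝ) i) = fun _ => (0:ℝ) :=
      funext fun x => hface i (b i) hb' x
    have e2 : (fun x : Fin n → ℝ => f (i.insertNth (a i) x : Fin (n+1) → ℝ) i) = fun _ => (0:ℝ) :=
      funext fun x => hface i (a i) ha' x
    simp only [e1, e2, integral_zero, sub_zero]

open Set in
theorem euc_div_zero {m : ℕ} (f : EuclideanSpace ℝ (Fin m) → EuclideanSpace ℝ (Fin m))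
    (hf : ContDiff ℝ 1 f) (hcs : HasCompactSupport f) :
    ∫ x, ∑ i, fderiv ℝ (fun y => (f y) i) x (EuclideanSpace.single i 1) = 0 := by
  cases m with
  | zero => simp
  | succ n =>
    set eL : EuclideanSpace ℝ (Fin (n+1)) ≃L[ℝ] (Fin (n+1) → ℝ) :=
      PiLp.continuousLinearEquiv 2 ℝ _ with heL
    set F : (Fin (n+1) → ℝ) → (Fin (n+1) → ℝ) := fun y => eL (f (eL.symm y)) with hF
    have hFc : ContDiff ℝ 1 F := eL.contDiff.comp (hf.comp eL.symm.contDiff)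
    have hFcs : HasCompactSupport F := by
      have h1 : HasCompactSupport (f ∘ eL.symm) := hcs.comp_homeomorph eL.symm.toHomeomorph
      exact h1.comp_left (g := eL) (map_zero eL)
    have key := pi_div_zero F hFc hFcs
    have hMP := (EuclideanSpace.volume_preserving_symm_measurableEquiv_toLp (Fin (n+1))).symm
    have htrans := hMP.integral_comp
      (MeasurableEquiv.toLp 2 (Fin (n+1) → ℝ)).measurableEmbedding
      (fun x => ∑ i, fderiv ℝ (fun y => (f y) i) x (EuclideanSpace.single i 1))
    rw [← htrans]
    rw [← key]
    congr 1
    funext y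
    congr 1
    funext i
    have h2 : (fun z : Fin (n+1) → ℝ => F z i) = (fun x => f x i) ∘ (eL.symm : _ ≃L[ℝ] _) := by
      funext z; rfl
    rw [h2, (eL.symm).comp_right_fderiv]
    rfl

theorem nonlinear_diffusion_semicontraction {m : ℕ}
    (G : EuclideanSpace ℝ (Fin m) → EuclideanSpace ℝ (Fin m))
    (hG : ContDiff ℝ 1 G)
    (hmono : ∀ p q : EuclideanSpace ℝ (Fin m), 0 ≤ ⟪G p - G q, p - q⟫)
    (φ₁ φ₂ : EuclideanSpace ℝ (Fin m) × ℝ → ℝ)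
    (hφ₁ : ContDiff ℝ 2 φ₁) (hφ₂ : ContDiff ℝ 2 φ₂)
    (hpde₁ : ∀ x t, deriv (fun s => φ₁ (x, s)) t =
      ∑ i, fderiv ℝ (fun y => (G (gradient (fun z => φ₁ (z, t)) y)) i) x
        (EuclideanSpace.single i 1))
    (hpde₂ : ∀ x t, deriv (fun s => φ₂ (x, s)) t =
      ∑ i, fderiv ℝ (fun y => (G (gradient (fun z => φ₂ (z, t)) y)) i) x
        (EuclideanSpace.single i 1))
    (K : Set (EuclideanSpace ℝ (Fin m))) (hK : IsCompact K)
    (hsupp : ∀ t, Function.support (fun x => φ₁ (x, t) - φ₂ (x, t)) ⊆ K) :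
    (∀ t, HasDerivAt (fun s => ∫ x, (φ₁ (x, s) - φ₂ (x, s)) ^ 2)
        (-2 * ∫ x, ⟪G (gradient (fun z => φ₁ (z, t)) x) - G (gradient (fun z => φ₂ (z, t)) x),
            gradient (fun z => φ₁ (z, t)) x - gradient (fun z => φ₂ (z, t)) x⟫) t ∧
      -2 * (∫ x, ⟪G (gradient (fun z => φ₁ (z, t)) x) - G (gradient (fun z => φ₂ (z, t)) x),
            gradient (fun z => φ₁ (z, t)) x - gradient (fun z => φ₂ (z, t)) x⟫) ≤ 0) ∧
    Antitone (fun t => ∫ x, (φ₁ (x, t) - φ₂ (x, t)) ^ 2) := by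
  have h12 : (1 : WithTop ℕ∞) + 1 ≤ (2 : WithTop ℕ∞) := by norm_num
  set w : EuclideanSpace ℝ (Fin m) × ℝ → ℝ := fun p => φ₁ p - φ₂ p with hwdef
  have hw : ContDiff ℝ 2 w := hφ₁.sub hφ₂
  set wt : EuclideanSpace ℝ (Fin m) × ℝ → ℝ := fun p => fderiv ℝ w p (0, 1) with hwtdef
  have hwtcont : Continuous wt :=
    ((hw.fderiv_right (m := 1) h12).continuous).clm_apply continuous_const
  have hDer : ∀ (x : EuclideanSpace ℝ (Fin m)) (t : ℝ), HasDerivAt (fun s => w (x, s)) (wt (x, t)) t := by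
    intro x t
    have h1 : HasFDerivAt w (fderiv ℝ w (x, t)) (x, t) :=
      ((hw.differentiable (by norm_num)) (x, t)).hasFDerivAt
    have h2 : HasDerivAt (fun s : ℝ => ((x, s) : EuclideanSpace ℝ (Fin m) × ℝ)) ((0 : EuclideanSpace ℝ (Fin m)), (1 : ℝ)) t :=
      (hasDerivAt_const t x).prodMk (hasDerivAt_id t)
    exact h1.comp_hasDerivAt t h2
  have hzero : ∀ (t : ℝ) (x : EuclideanSpace ℝ (Fin m)), x ∉ K → w (x, t) = 0 := by
    intro t x hx
    by_contra h
    exact hx (hsupp t h)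
  have hwtzero : ∀ (t : ℝ) (x : EuclideanSpace ℝ (Fin m)), x ∉ K → wt (x, t) = 0 := by
    intro t x hx
    have h0 : (fun s => w (x, s)) = fun _ : ℝ => (0:ℝ) := funext fun s => hzero s x hx
    have h1 := (hDer x t).deriv
    rw [h0] at h1
    simp at h1
    exact h1.symm
  have hint : ∀ g : EuclideanSpace ℝ (Fin m) → ℝ, Continuous g → (∀ x ∉ K, g x = 0) → Integrable g := by
    intro g hg h0
    exact hg.integrable_of_hasCompactSupport (HasCompactSupport.intro hK h0)
  -- the main per-time-point statement
  have main : ∀ t₀ : ℝ,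
      HasDerivAt (fun s => ∫ x, (φ₁ (x, s) - φ₂ (x, s)) ^ 2)
        (-2 * ∫ x, ⟪G (gradient (fun z => φ₁ (z, t₀)) x) - G (gradient (fun z => φ₂ (z, t₀)) x),
            gradient (fun z => φ₁ (z, t₀)) x - gradient (fun z => φ₂ (z, t₀)) x⟫) t₀ := by
    intro t₀
    -- gradients at time t₀
    have hφ₁t : ContDiff ℝ 2 (fun z : EuclideanSpace ℝ (Fin m) => φ₁ (z, t₀)) :=
      hφ₁.comp (contDiff_id.prodMk contDiff_const)
    have hφ₂t : ContDiff ℝ 2 (fun z : EuclideanSpace ℝ (Fin m) => φ₂ (z, t₀)) :=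
      hφ₂.comp (contDiff_id.prodMk contDiff_const)
    set g₁ : EuclideanSpace ℝ (Fin m) → EuclideanSpace ℝ (Fin m) := fun x => gradient (fun z => φ₁ (z, t₀)) x with hg₁def
    set g₂ : EuclideanSpace ℝ (Fin m) → EuclideanSpace ℝ (Fin m) := fun x => gradient (fun z => φ₂ (z, t₀)) x with hg₂def
    have hg₁ : ContDiff ℝ 1 g₁ := by
      have : g₁ = fun x => (InnerProductSpace.toDual ℝ (EuclideanSpace ℝ (Fin m))).symm (fderiv ℝ (fun z => φ₁ (z, t₀)) x) :=
        rfl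
      rw [this]
      exact (InnerProductSpace.toDual ℝ (EuclideanSpace ℝ (Fin m))).symm.contDiff.comp (hφ₁t.fderiv_right h12)
    have hg₂ : ContDiff ℝ 1 g₂ := by
      have : g₂ = fun x => (InnerProductSpace.toDual ℝ (EuclideanSpace ℝ (Fin m))).symm (fderiv ℝ (fun z => φ₂ (z, t₀)) x) :=
        rfl
      rw [this]
      exact (InnerProductSpace.toDual ℝ (EuclideanSpace ℝ (Fin m))).symm.contDiff.comp (hφ₂t.fderiv_right h12)
    set V : EuclideanSpace ℝ (Fin m) → EuclideanSpace ℝ (Fin m) := fun x => G (g₁ x) - G (g₂ x) with hVdef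
    have hV : ContDiff ℝ 1 V := (hG.comp hg₁).sub (hG.comp hg₂)
    set u : EuclideanSpace ℝ (Fin m) → ℝ := fun x => w (x, t₀) with hudef
    have hu : ContDiff ℝ 2 u := hw.comp (contDiff_id.prodMk contDiff_const)
    have hud : Differentiable ℝ u := hu.differentiable (by norm_num)
    have hφ₁d : Differentiable ℝ (fun z : EuclideanSpace ℝ (Fin m) => φ₁ (z, t₀)) :=
      hφ₁t.differentiable (by norm_num)
    have hφ₂d : Differentiable ℝ (fun z : EuclideanSpace ℝ (Fin m) => φ₂ (z, t₀)) :=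
      hφ₂t.differentiable (by norm_num)
    have hcomp : ∀ (f : EuclideanSpace ℝ (Fin m) → EuclideanSpace ℝ (Fin m)),
        ContDiff ℝ 1 f → ∀ i : Fin m, ContDiff ℝ 1 (fun y => f y i) := by
      intro f hf i
      exact (EuclideanSpace.proj i : EuclideanSpace ℝ (Fin m) →L[ℝ] ℝ).contDiff.comp hf
    have hgradu : ∀ x, gradient u x = g₁ x - g₂ x := by
      intro x
      have h1 : fderiv ℝ u x = fderiv ℝ (fun z : EuclideanSpace ℝ (Fin m) => φ₁ (z, t₀)) x
          - fderiv ℝ (fun z : EuclideanSpace ℝ (Fin m) => φ₂ (z, t₀)) x := by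
        have e : u = fun x : EuclideanSpace ℝ (Fin m) => φ₁ (x, t₀) - φ₂ (x, t₀) := rfl
        rw [e, fderiv_fun_sub (hφ₁d x) (hφ₂d x)]
      show (InnerProductSpace.toDual ℝ (EuclideanSpace ℝ (Fin m))).symm (fderiv ℝ u x) = _
      rw [h1, map_sub]
      rfl
    set divV : EuclideanSpace ℝ (Fin m) → ℝ :=
      fun x => ∑ i, fderiv ℝ (fun y => V y i) x (EuclideanSpace.single i 1) with hdivVdef
    -- identify the time derivative with the divergence
    have hd₁ : ∀ (x : EuclideanSpace ℝ (Fin m)),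
        HasDerivAt (fun s => φ₁ (x, s)) (fderiv ℝ φ₁ (x, t₀) (0, 1)) t₀ := by
      intro x
      have h1 : HasFDerivAt φ₁ (fderiv ℝ φ₁ (x, t₀)) (x, t₀) :=
        ((hφ₁.differentiable (by norm_num)) (x, t₀)).hasFDerivAt
      exact h1.comp_hasDerivAt t₀ ((hasDerivAt_const t₀ x).prodMk (hasDerivAt_id t₀))
    have hd₂ : ∀ (x : EuclideanSpace ℝ (Fin m)),
        HasDerivAt (fun s => φ₂ (x, s)) (fderiv ℝ φ₂ (x, t₀) (0, 1)) t₀ := by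
      intro x
      have h1 : HasFDerivAt φ₂ (fderiv ℝ φ₂ (x, t₀)) (x, t₀) :=
        ((hφ₂.differentiable (by norm_num)) (x, t₀)).hasFDerivAt
      exact h1.comp_hasDerivAt t₀ ((hasDerivAt_const t₀ x).prodMk (hasDerivAt_id t₀))
    have hwt_eq : ∀ x, wt (x, t₀) = divV x := by
      intro x
      have e1 : wt (x, t₀) = fderiv ℝ φ₁ (x, t₀) (0, 1) - fderiv ℝ φ₂ (x, t₀) (0, 1) := by
        show fderiv ℝ w (x, t₀) (0, 1) = _
        have e : fderiv ℝ w (x, t₀) = fderiv ℝ φ₁ (x, t₀) - fderiv ℝ φ₂ (x, t₀) :=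
          fderiv_fun_sub ((hφ₁.differentiable (by norm_num)) _) ((hφ₂.differentiable (by norm_num)) _)
        rw [e]; rfl
      rw [e1, (hd₁ x).deriv.symm.trans (hpde₁ x t₀), (hd₂ x).deriv.symm.trans (hpde₂ x t₀),
        ← Finset.sum_sub_distrib]
      symm
      rw [hdivVdef]
      refine Finset.sum_congr rfl fun i _ => ?_
      have hGg₁ : DifferentiableAt ℝ (fun y => (G (g₁ y)) i) x :=
        ((hcomp _ (hG.comp hg₁) i).differentiable one_ne_zero) x
      have hGg₂ : DifferentiableAt ℝ (fun y => (G (g₂ y)) i) x :=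
        ((hcomp _ (hG.comp hg₂) i).differentiable one_ne_zero) x
      have e2 : (fun y => V y i) = fun y => (G (g₁ y)) i - (G (g₂ y)) i := rfl
      rw [e2, fderiv_fun_sub hGg₁ hGg₂]
      rfl
    -- divergence identity and integration by parts
    set f₀ : EuclideanSpace ℝ (Fin m) → EuclideanSpace ℝ (Fin m) := fun x => u x • V x with hf₀def
    have hf₀ : ContDiff ℝ 1 f₀ := (hu.of_le (by norm_num)).smul hV
    have hf₀cs : HasCompactSupport f₀ := HasCompactSupport.intro hK (fun x hx => by
      show u x • V x = 0
      rw [show u x = 0 from hzero t₀ x hx, zero_smul])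
    have hdiv0 := euc_div_zero f₀ hf₀ hf₀cs
    have hptwise : ∀ x, ∑ i, fderiv ℝ (fun y => (f₀ y) i) x (EuclideanSpace.single i 1)
        = ⟪gradient u x, V x⟫ + u x * divV x := by
      intro x
      have hVi : ∀ i, DifferentiableAt ℝ (fun y => V y i) x := fun i =>
        ((hcomp V hV i).differentiable one_ne_zero) x
      have e1 : ∀ i : Fin m, fderiv ℝ (fun y => (f₀ y) i) x =
          u x • fderiv ℝ (fun y => V y i) x + V x i • fderiv ℝ u x := by
        intro i
        have e0 : (fun y => (f₀ y) i) = fun y => u y * V y i := rfl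
        rw [e0, fderiv_fun_mul (hud x) (hVi i)]
      have hbasis : V x = ∑ i, V x i • EuclideanSpace.single i (1:ℝ) := by
        simpa [EuclideanSpace.basisFun_apply, EuclideanSpace.basisFun_repr] using
          ((EuclideanSpace.basisFun (Fin m) ℝ).sum_repr (V x)).symm
      have e2 : (fderiv ℝ u x) (V x)
          = ∑ i, V x i * (fderiv ℝ u x) (EuclideanSpace.single i 1) := by
        conv_lhs => rw [hbasis]
        rw [map_sum]
        simp [smul_eq_mul]
      have e3 : ⟪gradient u x, V x⟫ = (fderiv ℝ u x) (V x) :=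
        InnerProductSpace.toDual_symm_apply
      simp only [e1, ContinuousLinearMap.add_apply, ContinuousLinearMap.smul_apply,
        smul_eq_mul, Finset.sum_add_distrib, ← Finset.mul_sum]
      rw [e3, e2]
      ring
    have hucont : Continuous u := hu.continuous
    have hgradcont : Continuous (fun x => gradient u x) := by
      have e : (fun x => gradient u x) =
          fun x => (InnerProductSpace.toDual ℝ (EuclideanSpace ℝ (Fin m))).symm (fderiv ℝ u x) :=
        rfl
      rw [e]
      exact (LinearIsometryEquiv.continuous _).comp ((hu.fderiv_right h12).continuous)
    have hVcont : Continuous V := hV.continuous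
    have hdivVcont : Continuous divV := continuous_finset_sum _ fun i _ =>
      (((hcomp V hV i).fderiv_right (m := 0) (by norm_num)).continuous).clm_apply continuous_const
    have hgradzero : ∀ x ∉ K, gradient u x = 0 := by
      intro x hx
      have hop : IsOpen Kᶜ := hK.isClosed.isOpen_compl
      have hev : u =ᶠ[nhds x] (fun _ => (0:ℝ)) := by
        filter_upwards [hop.mem_nhds hx] with y hy
        exact hzero t₀ y hy
      show (InnerProductSpace.toDual ℝ (EuclideanSpace ℝ (Fin m))).symm (fderiv ℝ u x) = 0
      rw [hev.fderiv_eq, fderiv_fun_const]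
      simp
    have hI1 : Integrable (fun x => ⟪gradient u x, V x⟫) :=
      hint _ (hgradcont.inner hVcont) (fun x hx => by rw [hgradzero x hx]; simp)
    have hI2 : Integrable (fun x => u x * divV x) :=
      hint _ (hucont.mul hdivVcont) (fun x hx => by
        rw [show u x = 0 from hzero t₀ x hx, zero_mul])
    have hsum : (∫ x, ⟪gradient u x, V x⟫) + ∫ x, u x * divV x = 0 := by
      rw [← integral_add hI1 hI2, ← hdiv0]
      congr 1
      funext x
      exact (hptwise x).symm
    -- differentiation under the integral sign
    have hC2 : Continuous fun p : EuclideanSpace ℝ (Fin m) × ℝ => 2 * w p * wt p :=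
      (continuous_const.mul hw.continuous).mul hwtcont
    obtain ⟨C, hC⟩ := (hK.prod (isCompact_closedBall t₀ 1)).exists_bound_of_continuousOn
      hC2.continuousOn
    have hbound_int : Integrable (K.indicator fun _ => C) :=
      (integrable_indicator_iff hK.isClosed.measurableSet).2
        (integrableOn_const hK.measure_lt_top.ne)
    have hderint := hasDerivAt_integral_of_dominated_loc_of_deriv_le
      (F := fun s (x : EuclideanSpace ℝ (Fin m)) => w (x, s) ^ 2)
      (F' := fun s (x : EuclideanSpace ℝ (Fin m)) => 2 * w (x, s) * wt (x, s))
      (μ := volume) (x₀ := t₀) (s := Metric.ball t₀ 1) (Metric.ball_mem_nhds t₀ one_pos)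
      (Filter.Eventually.of_forall fun s =>
        ((hw.continuous.comp (continuous_id.prodMk continuous_const)).pow 2).aestronglyMeasurable)
      (hint (fun x => w (x, t₀) ^ 2)
        (by exact (hw.continuous.comp (continuous_id.prodMk continuous_const)).pow 2)
        (fun x hx => by simp [hzero t₀ x hx]))
      (by exact (hC2.comp (continuous_id.prodMk continuous_const)).aestronglyMeasurable)
      (Filter.Eventually.of_forall fun x => by
        intro s hs
        by_cases hx : x ∈ K
        · rw [Set.indicator_of_mem hx]
          exact hC (x, s) ⟨hx, Metric.ball_subset_closedBall hs⟩
        · rw [Set.indicator_of_notMem hx]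
          simp [hzero s x hx, hwtzero s x hx])
      hbound_int
      (Filter.Eventually.of_forall fun x => by
        intro s hs
        have := (hDer x s).fun_pow 2
        simpa using this)
    have hstep := hderint.2
    have hval : (∫ x, 2 * w (x, t₀) * wt (x, t₀))
        = -2 * ∫ x, ⟪G (g₁ x) - G (g₂ x), g₁ x - g₂ x⟫ := by
      have e1 : (∫ x, 2 * w (x, t₀) * wt (x, t₀)) = 2 * ∫ x, u x * divV x := by
        rw [← integral_const_mul]
        congr 1
        funext x
        rw [hwt_eq x]
        show 2 * u x * divV x = 2 * (u x * divV x)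
        ring
      have e2 : (∫ x, u x * divV x) = - ∫ x, ⟪gradient u x, V x⟫ := by linarith
      have e3 : (∫ x, ⟪gradient u x, V x⟫)
          = ∫ x, ⟪G (g₁ x) - G (g₂ x), g₁ x - g₂ x⟫ := by
        congr 1
        funext x
        rw [hgradu x]
        exact real_inner_comm _ _
      rw [e1, e2, e3]
      ring
    rw [hval] at hstep
    exact hstep
  refine ⟨fun t => ⟨main t, ?_⟩, ?_⟩
  · have hnn : 0 ≤ ∫ x, ⟪G (gradient (fun z => φ₁ (z, t)) x) - G (gradient (fun z => φ₂ (z, t)) x),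
        gradient (fun z => φ₁ (z, t)) x - gradient (fun z => φ₂ (z, t)) x⟫ :=
      integral_nonneg fun x => hmono _ _
    linarith
  · apply antitone_of_deriv_nonpos
    · exact fun t => (main t).differentiableAt
    · intro t
      rw [(main t).deriv]
      have hnn : 0 ≤ ∫ x, ⟪G (gradient (fun z => φ₁ (z, t)) x) -
          G (gradient (fun z => φ₂ (z, t)) x),
          gradient (fun z => φ₁ (z, t)) x - gradient (fun z => φ₂ (z, t)) x⟫ :=
        integral_nonneg fun x => hmono _ _
      linarith
end

section
/- For a real number a, write a₊ = max(a, 0) and a₋ = max(−a, 0). Let M be the real 3 × 3 matrix whose only nonzero entries are M₀₀ = a₊/2, M₁₀ = −a₊, M₁₁ = |a|/2, M₁₂ = −a₋, M₂₂ = a₋/2. Then for every x ∈ ℝ³, xᵀ M x ≥ 0; that is, the symmetric part of M is positive semi-definite. -/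
open Matrix

theorem upwind_block_psd (a : ℝ)
    (M : Matrix (Fin 3) (Fin 3) ℝ)
    (hM : M = !![max a 0 / 2,       0,               0;
                 -(max a 0),        |a| / 2,         -(max (-a) 0);
                 0,                 0,               max (-a) 0 / 2]) :
    ∀ x : Fin 3 → ℝ, 0 ≤ x ⬝ᵥ (M *ᵥ x) := by
  intro x
  subst hM
  have habs : |a| = max a 0 + max (-a) 0 := by
    rcases le_total a 0 with h | h
    · rw [abs_of_nonpos h, max_eq_right h, max_eq_left (by linarith)]; ring
    · rw [abs_of_nonneg h, max_eq_left h, max_eq_right (by linarith)]; ring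
  have h1 : (0:ℝ) ≤ max a 0 := le_max_right _ _
  have h2 : (0:ℝ) ≤ max (-a) 0 := le_max_right _ _
  rw [show ((!![max a 0 / 2, 0, 0; -(max a 0), |a| / 2, -(max (-a) 0); 0, 0,
        max (-a) 0 / 2] : Matrix (Fin 3) (Fin 3) ℝ) *ᵥ x) =
      ![max a 0 / 2 * x 0, -(max a 0) * x 0 + |a| / 2 * x 1 + -(max (-a) 0) * x 2,
        max (-a) 0 / 2 * x 2] from ?_]
  · simp only [dotProduct, Fin.sum_univ_three, Matrix.cons_val_zero, Matrix.cons_val_one,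
      Matrix.head_cons, Matrix.cons_val_two, Matrix.tail_cons, habs]
    nlinarith [mul_nonneg h1 (sq_nonneg (x 0 - x 1)), mul_nonneg h2 (sq_nonneg (x 1 - x 2))]
  · funext i
    fin_cases i <;>
      simp [Matrix.mulVec, dotProduct, Fin.sum_univ_three]
end

section
/- Let h : ℝ^m × ℝ^m × ℝ → ℝ, (p,x,t) ↦ h(p,x,t), be continuously differentiable, and let φ : ℝ^m × ℝ → ℝ be twice continuously differentiable (jointly in (x,t)) and satisfy the Hamilton–Jacobi equation ∂φ/∂t(x,t) + h(∇φ(x,t), x, t) = 0 for all (x,t). Let x̂ : ℝ → ℝ^m be differentiable and track the minimum of φ, i.e. ∇φ(x̂(t), t) = 0 for all t, and suppose the Hessian matrix P(t) = (∇∇φ)(x̂(t), t) is invertible for every t. Then x̂′(t) = ∇_p h(0, x̂(t), t) + P(t)⁻¹ ∇_x h(0, x̂(t), t) for all t. -/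
open Matrix RealInnerProductSpace

/-- The Hessian matrix of a scalar function on `ℝ^m`, as the Jacobian of its gradient. -/
noncomputable def hessMat {m : ℕ} (ψ : EuclideanSpace ℝ (Fin m) → ℝ)
    (x : EuclideanSpace ℝ (Fin m)) : Matrix (Fin m) (Fin m) ℝ :=
  fun i j => (fderiv ℝ (fun y => gradient ψ y) x (EuclideanSpace.single j 1)) i

set_option maxHeartbeats 1000000 in
theorem optimal_observer_dynamics {m : ℕ}
    (h : EuclideanSpace ℝ (Fin m) → EuclideanSpace ℝ (Fin m) → ℝ → ℝ)
    (φ : EuclideanSpace ℝ (Fin m) × ℝ → ℝ)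
    (xhat : ℝ → EuclideanSpace ℝ (Fin m))
    (hh : ContDiff ℝ 1 (fun q : EuclideanSpace ℝ (Fin m) × EuclideanSpace ℝ (Fin m) × ℝ =>
      h q.1 q.2.1 q.2.2))
    (hφ : ContDiff ℝ 2 φ)
    (hpde : ∀ y t, deriv (fun s => φ (y, s)) t
      + h (gradient (fun z => φ (z, t)) y) y t = 0)
    (hxhat : Differentiable ℝ xhat)
    (hmin : ∀ t, gradient (fun y => φ (y, t)) (xhat t) = 0)
    (P : ℝ → Matrix (Fin m) (Fin m) ℝ)
    (hP : ∀ t, P t = hessMat (fun y => φ (y, t)) (xhat t))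
    (hPinv : ∀ t, IsUnit (P t)) :
    ∀ t, HasDerivAt xhat
      (gradient (fun p => h p (xhat t) t) 0
        + (EuclideanSpace.equiv (Fin m) ℝ).symm
            ((P t)⁻¹ *ᵥ (EuclideanSpace.equiv (Fin m) ℝ)
              (gradient (fun y => h 0 y t) (xhat t)))) t := by
  intro t
  classical
  have hφd : Differentiable ℝ φ := hφ.differentiable (by norm_num)
  have hf'c : ContDiff ℝ 1 (fderiv ℝ φ) := hφ.fderiv_right (by norm_num)
  have hhd : Differentiable ℝ
      (fun q : EuclideanSpace ℝ (Fin m) × EuclideanSpace ℝ (Fin m) × ℝ => h q.1 q.2.1 q.2.2) :=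
    hh.differentiable (by norm_num)
  set gp : EuclideanSpace ℝ (Fin m) := gradient (fun p => h p (xhat t) t) 0 with hgp
  set gx : EuclideanSpace ℝ (Fin m) := gradient (fun y => h 0 y t) (xhat t) with hgx
  set v : EuclideanSpace ℝ (Fin m) := deriv xhat t with hvdef
  have hv : HasDerivAt xhat v t := (hxhat t).hasDerivAt
  set inlE : EuclideanSpace ℝ (Fin m) →L[ℝ] EuclideanSpace ℝ (Fin m) × ℝ :=
    ContinuousLinearMap.inl ℝ _ ℝ with hinlE
  set f'' := fderiv ℝ (fderiv ℝ φ) (xhat t, t) with hf''def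
  have hf'' : HasFDerivAt (fderiv ℝ φ) f'' (xhat t, t) :=
    (hf'c.differentiable (by norm_num) (xhat t, t)).hasFDerivAt
  have hsymm : ∀ a b, f'' a b = f'' b a :=
    hφ.contDiffAt.isSymmSndFDerivAt (by norm_num)
  -- partial x-derivatives of φ
  have hpart : ∀ (y : EuclideanSpace ℝ (Fin m)) (s : ℝ),
      HasFDerivAt (fun z => φ (z, s)) ((fderiv ℝ φ (y, s)).comp inlE) y := by
    intro y s
    exact (hφd (y, s)).hasFDerivAt.comp y (hasFDerivAt_prodMk_left y s)
  have h1 : HasFDerivAt (fun y => fderiv ℝ φ (y, t)) (f''.comp inlE) (xhat t) := by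
    have := hf''.comp (f := fun e => ((e, t) : EuclideanSpace ℝ (Fin m) × ℝ)) (xhat t) (hasFDerivAt_prodMk_left (xhat t) t)
    simpa [Function.comp_def] using this
  -- gradient of restricted φ vanishes along xhat
  have hgrad0 : ∀ s : ℝ, (fderiv ℝ φ (xhat s, s)).comp inlE = 0 := by
    intro s
    have h1' : fderiv ℝ (fun z => φ (z, s)) (xhat s) = (fderiv ℝ φ (xhat s, s)).comp inlE :=
      (hpart (xhat s) s).fderiv
    have h2 := hmin s
    unfold gradient at h2
    rw [h1'] at h2
    have := congrArg (InnerProductSpace.toDual ℝ (EuclideanSpace ℝ (Fin m))) h2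
    simpa using this
  -- key1 : f'' (v,1) (u,0) = 0
  have key1 : ∀ u : EuclideanSpace ℝ (Fin m), f'' (v, 1) (u, 0) = 0 := by
    intro u
    have hev := (ContinuousLinearMap.apply ℝ ℝ ((u, 0) :
        EuclideanSpace ℝ (Fin m) × ℝ)).hasFDerivAt (x := fderiv ℝ φ (xhat t, t))
    have hc : HasDerivAt (fun s : ℝ => (xhat s, s)) ((v, 1) : EuclideanSpace ℝ (Fin m) × ℝ) t :=
      hv.prodMk (hasDerivAt_id t)
    have hF : HasFDerivAt (fun q : EuclideanSpace ℝ (Fin m) × ℝ => fderiv ℝ φ q (u, 0))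
        ((ContinuousLinearMap.apply ℝ ℝ ((u, 0) : EuclideanSpace ℝ (Fin m) × ℝ)).comp f'')
        (xhat t, t) := hev.comp (xhat t, t) hf''
    have hcomp : HasDerivAt (fun s : ℝ => fderiv ℝ φ (xhat s, s) (u, 0)) (f'' (v, 1) (u, 0)) t := by
      have := hF.comp_hasDerivAt (f := fun s => (xhat s, s)) t hc
      simpa [Function.comp_def] using this
    have hzero : (fun s : ℝ => fderiv ℝ φ (xhat s, s) (u, 0)) = fun _ => (0 : ℝ) := by
      funext s
      have := congrArg (fun L => L u) (hgrad0 s)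
      simpa [hinlE] using this
    rw [hzero] at hcomp
    exact hcomp.unique (hasDerivAt_const t 0)
  -- the derivative Dg of the gradient map
  set Tds : StrongDual ℝ (EuclideanSpace ℝ (Fin m)) →L[ℝ] EuclideanSpace ℝ (Fin m) :=
    (InnerProductSpace.toDual ℝ
      (EuclideanSpace ℝ (Fin m))).symm.toContinuousLinearEquiv.toContinuousLinearMap with hTds
  set cmp : (EuclideanSpace ℝ (Fin m) × ℝ →L[ℝ] ℝ) →L[ℝ] (EuclideanSpace ℝ (Fin m) →L[ℝ] ℝ) :=
    (ContinuousLinearMap.compL ℝ (EuclideanSpace ℝ (Fin m))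
      (EuclideanSpace ℝ (Fin m) × ℝ) ℝ).flip inlE with hcmp
  set Dg : EuclideanSpace ℝ (Fin m) →L[ℝ] EuclideanSpace ℝ (Fin m) :=
    (Tds.comp cmp).comp (f''.comp inlE) with hDgdef
  have hgeq2 : ∀ y, gradient (fun z => φ (z, t)) y = (Tds.comp cmp) (fderiv ℝ φ (y, t)) := by
    intro y
    show (InnerProductSpace.toDual ℝ _).symm (fderiv ℝ (fun z => φ (z, t)) y) = _
    rw [(hpart y t).fderiv]
    rfl
  have hg : HasFDerivAt (fun y => gradient (fun z => φ (z, t)) y) Dg (xhat t) := by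
    have hfun : (fun y => gradient (fun z => φ (z, t)) y)
        = fun y => (Tds.comp cmp) (fderiv ℝ φ (y, t)) := funext hgeq2
    rw [hfun]
    have := (Tds.comp cmp).hasFDerivAt.comp (xhat t) h1
    simpa [Function.comp_def, ContinuousLinearMap.comp_assoc, hDgdef] using this
  have hinner : ∀ u w : EuclideanSpace ℝ (Fin m), ⟪Dg u, w⟫ = f'' (u, 0) (w, 0) := by
    intro u w
    have hDgu : Dg u = (InnerProductSpace.toDual ℝ
        (EuclideanSpace ℝ (Fin m))).symm ((f'' (u, 0)).comp inlE) := rfl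
    rw [hDgu, InnerProductSpace.toDual_symm_apply]
    rfl
  -- the Hamilton-Jacobi identity for the time partial derivative
  have hpt : ∀ y : EuclideanSpace ℝ (Fin m),
      fderiv ℝ φ (y, t) ((0 : EuclideanSpace ℝ (Fin m)), (1 : ℝ))
        = -(h (gradient (fun z => φ (z, t)) y) y t) := by
    intro y
    have hd : HasDerivAt (fun s => φ (y, s)) (fderiv ℝ φ (y, t) (0, 1)) t := by
      have := (hφd (y, t)).hasFDerivAt.comp_hasDerivAt
        (f := fun s => ((y, s) : EuclideanSpace ℝ (Fin m) × ℝ)) t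
        ((hasDerivAt_const t y).prodMk (hasDerivAt_id t))
      simpa [Function.comp_def] using this
    have hp := hpde y t
    rw [hd.deriv] at hp
    linarith
  -- second key identity
  set Dh := fderiv ℝ (fun q : EuclideanSpace ℝ (Fin m) × EuclideanSpace ℝ (Fin m) × ℝ =>
    h q.1 q.2.1 q.2.2) (0, xhat t, t) with hDhdef
  set K : EuclideanSpace ℝ (Fin m) →L[ℝ]
      EuclideanSpace ℝ (Fin m) × EuclideanSpace ℝ (Fin m) × ℝ :=
    Dg.prod ((ContinuousLinearMap.id ℝ _).prod 0) with hK
  have key2 : ∀ u : EuclideanSpace ℝ (Fin m),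
      f'' (u, 0) ((0 : EuclideanSpace ℝ (Fin m)), (1 : ℝ)) = -(Dh (Dg u, u, 0)) := by
    have hA : HasFDerivAt
        (fun y => fderiv ℝ φ (y, t) ((0 : EuclideanSpace ℝ (Fin m)), (1 : ℝ)))
        ((ContinuousLinearMap.apply ℝ ℝ (((0 : EuclideanSpace ℝ (Fin m)), (1 : ℝ)))).comp
          (f''.comp inlE)) (xhat t) := by
      have := ((ContinuousLinearMap.apply ℝ ℝ
        (((0 : EuclideanSpace ℝ (Fin m)), (1 : ℝ)))).hasFDerivAt).comp (xhat t) h1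
      simpa [Function.comp_def, ContinuousLinearMap.comp_assoc] using this
    have hk : HasFDerivAt (fun y => ((gradient (fun z => φ (z, t)) y, y, t) :
        EuclideanSpace ℝ (Fin m) × EuclideanSpace ℝ (Fin m) × ℝ)) K (xhat t) :=
      hg.prodMk ((hasFDerivAt_id _).prodMk (hasFDerivAt_const t _))
    have hl : HasFDerivAt (fun q : EuclideanSpace ℝ (Fin m) × EuclideanSpace ℝ (Fin m) × ℝ =>
        h q.1 q.2.1 q.2.2) Dh (gradient (fun z => φ (z, t)) (xhat t), xhat t, t) := by
      rw [hmin t]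
      exact (hhd _).hasFDerivAt
    have hB : HasFDerivAt (fun y => h (gradient (fun z => φ (z, t)) y) y t)
        (Dh.comp K) (xhat t) := by
      have := hl.comp (xhat t) hk
      simpa [Function.comp_def] using this
    have heq : (fun y => fderiv ℝ φ (y, t) ((0 : EuclideanSpace ℝ (Fin m)), (1 : ℝ)))
        = fun y => -(h (gradient (fun z => φ (z, t)) y) y t) := funext hpt
    rw [heq] at hA
    have huniq := hA.unique hB.neg
    intro u
    have := congrArg (fun L : EuclideanSpace ℝ (Fin m) →L[ℝ] ℝ => L u) huniq
    simpa [hK, hinlE] using this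
  -- gradients of h as pairings with Dh
  have hip1 : ∀ w : EuclideanSpace ℝ (Fin m), ⟪gp, w⟫ = Dh (w, 0, 0) := by
    have hDh1 : HasFDerivAt (fun p => h p (xhat t) t)
        (Dh.comp (ContinuousLinearMap.inl ℝ (EuclideanSpace ℝ (Fin m))
          (EuclideanSpace ℝ (Fin m) × ℝ))) (0 : EuclideanSpace ℝ (Fin m)) := by
      have := (hhd (0, xhat t, t)).hasFDerivAt.comp (f := fun e => ((e, xhat t, t) :
          EuclideanSpace ℝ (Fin m) × EuclideanSpace ℝ (Fin m) × ℝ)) (0 : EuclideanSpace ℝ (Fin m))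
        (hasFDerivAt_prodMk_left (0 : EuclideanSpace ℝ (Fin m))
          ((xhat t, t) : EuclideanSpace ℝ (Fin m) × ℝ))
      simpa [Function.comp_def] using this
    intro w
    have hgpe : gp = (InnerProductSpace.toDual ℝ (EuclideanSpace ℝ (Fin m))).symm
        (Dh.comp (ContinuousLinearMap.inl ℝ (EuclideanSpace ℝ (Fin m))
          (EuclideanSpace ℝ (Fin m) × ℝ))) := by
      rw [hgp]
      show (InnerProductSpace.toDual ℝ _).symm (fderiv ℝ (fun p => h p (xhat t) t) 0) = _
      rw [hDh1.fderiv]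
    rw [hgpe, InnerProductSpace.toDual_symm_apply]
    rfl
  have hip2 : ∀ u : EuclideanSpace ℝ (Fin m), ⟪gx, u⟫ = Dh (0, u, 0) := by
    have hk2 : HasFDerivAt (fun y => (((0 : EuclideanSpace ℝ (Fin m)), y, t) :
        EuclideanSpace ℝ (Fin m) × EuclideanSpace ℝ (Fin m) × ℝ))
        ((0 : EuclideanSpace ℝ (Fin m) →L[ℝ] EuclideanSpace ℝ (Fin m)).prod
          ((ContinuousLinearMap.id ℝ _).prod 0)) (xhat t) :=
      (hasFDerivAt_const (0 : EuclideanSpace ℝ (Fin m)) _).prodMk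
        ((hasFDerivAt_id _).prodMk (hasFDerivAt_const t _))
    have hDh2 : HasFDerivAt (fun y => h 0 y t)
        (Dh.comp ((0 : EuclideanSpace ℝ (Fin m) →L[ℝ] EuclideanSpace ℝ (Fin m)).prod
          ((ContinuousLinearMap.id ℝ _).prod 0))) (xhat t) := by
      have := (hhd (0, xhat t, t)).hasFDerivAt.comp (xhat t) hk2
      simpa [Function.comp_def] using this
    intro u
    have hgxe : gx = (InnerProductSpace.toDual ℝ (EuclideanSpace ℝ (Fin m))).symm
        (Dh.comp ((0 : EuclideanSpace ℝ (Fin m) →L[ℝ] EuclideanSpace ℝ (Fin m)).prod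
          ((ContinuousLinearMap.id ℝ _).prod 0))) := by
      rw [hgx]
      show (InnerProductSpace.toDual ℝ _).symm (fderiv ℝ (fun y => h 0 y t) (xhat t)) = _
      rw [hDh2.fderiv]
    rw [hgxe, InnerProductSpace.toDual_symm_apply]
    rfl
  have hsplit : ∀ w u : EuclideanSpace ℝ (Fin m),
      Dh (w, u, 0) = Dh (w, 0, 0) + Dh (0, u, 0) := by
    intro w u
    have hps : ((w, u, (0 : ℝ)) : EuclideanSpace ℝ (Fin m) × EuclideanSpace ℝ (Fin m) × ℝ)
        = (w, 0, 0) + (0, u, 0) := by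
      simp [Prod.ext_iff]
    rw [hps, map_add]
  -- the main pointwise identity
  have main : ∀ u : EuclideanSpace ℝ (Fin m), ⟪Dg v, u⟫ = ⟪Dg gp, u⟫ + ⟪gx, u⟫ := by
    intro u
    have e1 : f'' (v, 0) (u, 0) + f'' (0, 1) (u, 0) = 0 := by
      have hadd : ((v, (1 : ℝ)) : EuclideanSpace ℝ (Fin m) × ℝ) = (v, 0) + (0, 1) := by
        simp [Prod.ext_iff]
      have := key1 u
      rw [hadd, map_add, ContinuousLinearMap.add_apply] at this
      exact this
    have e2 : f'' ((0 : EuclideanSpace ℝ (Fin m)), (1 : ℝ)) (u, 0)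
        = -(⟪gp, Dg u⟫ + ⟪gx, u⟫) := by
      rw [hsymm (0, 1) (u, 0), key2 u, hsplit (Dg u) u, hip1 (Dg u), hip2 u]
    have e3 : ⟪gp, Dg u⟫ = ⟪Dg gp, u⟫ := by
      rw [real_inner_comm, hinner u gp, hsymm (u, 0) (gp, 0), ← hinner gp u]
    rw [hinner v u, hinner gp u]
    rw [e2, e3, hinner gp u] at e1
    linarith
  have hvec : Dg v = Dg gp + gx := by
    have hz : ∀ u : EuclideanSpace ℝ (Fin m), ⟪Dg v - (Dg gp + gx), u⟫ = 0 := by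
      intro u
      rw [inner_sub_left, inner_add_left]
      have := main u
      linarith
    have := hz (Dg v - (Dg gp + gx))
    rw [inner_self_eq_zero] at this
    exact sub_eq_zero.mp this
  -- matrix identification of Dg with P t
  have hPapp : ∀ w : EuclideanSpace ℝ (Fin m),
      P t *ᵥ (EuclideanSpace.equiv (Fin m) ℝ) w = (EuclideanSpace.equiv (Fin m) ℝ) (Dg w) := by
    intro w
    have hPij : ∀ i j, P t i j = Dg (EuclideanSpace.single j 1) i := by
      intro i j
      rw [hP t]
      show (fderiv ℝ (fun y => gradient (fun y => φ (y, t)) y) (xhat t)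
        (EuclideanSpace.single j 1)) i = _
      rw [hg.fderiv]
    funext i
    have hw : ∑ j, w j • EuclideanSpace.single j (1 : ℝ) = w := by
      simpa [EuclideanSpace.basisFun_apply] using (EuclideanSpace.basisFun (Fin m) ℝ).sum_repr w
    have hDgw : Dg w i = ∑ j, w j * Dg (EuclideanSpace.single j 1) i := by
      calc Dg w i = ((EuclideanSpace.proj i).comp Dg) w := rfl
        _ = ((EuclideanSpace.proj i).comp Dg) (∑ j, w j • EuclideanSpace.single j 1) := by
            rw [hw]
        _ = ∑ j, w j * Dg (EuclideanSpace.single j 1) i := by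
            rw [map_sum]
            simp [smul_eq_mul]
    have hlhs : (P t *ᵥ (EuclideanSpace.equiv (Fin m) ℝ) w) i
        = ∑ j, P t i j * w j := by
      simp [Matrix.mulVec, dotProduct]
    rw [hlhs]
    show _ = Dg w i
    rw [hDgw]
    congr 1
    funext j
    rw [hPij i j, mul_comm]
  have h9 : P t *ᵥ (EuclideanSpace.equiv (Fin m) ℝ) (v - gp)
      = (EuclideanSpace.equiv (Fin m) ℝ) gx := by
    rw [hPapp]
    have hsub : Dg (v - gp) = gx := by
      rw [map_sub, hvec]
      abel
    rw [hsub]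
  have h10 : (EuclideanSpace.equiv (Fin m) ℝ) (v - gp)
      = (P t)⁻¹ *ᵥ (EuclideanSpace.equiv (Fin m) ℝ) gx := by
    rw [← h9, Matrix.mulVec_mulVec,
      Matrix.nonsing_inv_mul _ ((Matrix.isUnit_iff_isUnit_det _).1 (hPinv t)),
      Matrix.one_mulVec]
  have h11 : v = gp + (EuclideanSpace.equiv (Fin m) ℝ).symm
      ((P t)⁻¹ *ᵥ (EuclideanSpace.equiv (Fin m) ℝ) gx) := by
    have h12 := congrArg (EuclideanSpace.equiv (Fin m) ℝ).symm h10
    rw [ContinuousLinearEquiv.symm_apply_apply] at h12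
    rw [← h12]
    abel
  rw [← h11]
  exact hv
end
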